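/- Let {x_n}, {y_n}, {z_n} (n ∈ ℤ\{0}) be complex sequences satisfying x_{n1}·y_{n2} − x_{n1+n2}·z_{n2} + y_{n1+n2}·z_{−n1} = 0 for all n1 ≠ 0, n2 ≠ 0, n1+n2 ≠ 0, the parity condition x_{−n} = conj(x_n), y_{−n} = conj(y_n), z_{−n} = conj(z_n), and the summability condition ∑_{n≥1} (|x_n| + |y_n| + |z_n|) < ∞. Then the solution is one-dimensional: either y_n = z_n = 0 for all n ≠ 0, or x_n = z_n = 0 for all n ≠ 0, or x_n = y_n = 0 for all n ≠ 0. -/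

import Mathlib

open Filter Finset

private lemma habs_sub (u v : ℂ) : norm (u - v) ≤ norm u + norm v := by
  simpa [sub_eq_add_neg] using norm_add_le u (-v)

private lemma arith_helper {μ p q ζ ζ' : ℝ} (hμ : 0 < μ) (hp : 0 ≤ p) (hq : 0 ≤ q)
    (hζ : 0 ≤ ζ) (hζ' : 0 ≤ ζ')
    (h : μ * ζ ≤ (μ + p) * ζ' + q * ζ) :
    (1 - 2 * ((p + q) / μ)) * ζ ≤ ζ' := by
  have he : 0 ≤ (p + q) / μ := by positivity
  rcases le_or_gt ζ' ζ with hle | hlt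
  · have h2 : (μ - p - q) * ζ ≤ μ * ζ' := by nlinarith
    have h3 : (1 - 2 * ((p + q) / μ)) * μ = μ - 2 * (p + q) := by
      field_simp
    have h4 : (1 - 2 * ((p + q) / μ)) * ζ * μ ≤ μ * ζ' := by
      calc (1 - 2 * ((p + q) / μ)) * ζ * μ = ((1 - 2 * ((p + q) / μ)) * μ) * ζ := by ring
        _ = (μ - 2 * (p + q)) * ζ := by rw [h3]
        _ ≤ (μ - p - q) * ζ := by nlinarith
        _ ≤ μ * ζ' := h2
    nlinarith
  · nlinarith

private lemma chain_lower (ζ e : ℕ → ℝ) (hζ : ∀ j, 0 ≤ ζ j) (he : ∀ j, 0 ≤ e j)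
    (hS : ∀ J, ∑ j ∈ Finset.range J, e j ≤ 1 / 8)
    (hstep : ∀ j, (1 - 2 * e j) * ζ j ≤ ζ (j + 1)) :
    ∀ J, (1 - 2 * ∑ j ∈ Finset.range J, e j) * ζ 0 ≤ ζ J := by
  intro J
  induction J with
  | zero => simp
  | succ J ih =>
    have hsum : ∑ j ∈ Finset.range (J + 1), e j = (∑ j ∈ Finset.range J, e j) + e J :=
      Finset.sum_range_succ e J
    have hSnn : 0 ≤ ∑ j ∈ Finset.range J, e j := Finset.sum_nonneg fun i _ => he i
    have heJ : e J ≤ 1 / 8 := by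
      have := hS (J + 1); rw [hsum] at this; linarith
    have h1 : (1 - 2 * e J) * ((1 - 2 * ∑ j ∈ Finset.range J, e j) * ζ 0)
        ≤ (1 - 2 * e J) * ζ J :=
      mul_le_mul_of_nonneg_left ih (by linarith [he J])
    have h2 := hstep J
    rw [hsum]
    nlinarith [hζ 0, he J, mul_nonneg (he J) hSnn, mul_nonneg (mul_nonneg (he J) hSnn) (hζ 0)]

section Main

variable (x y z : ℤ → ℂ)
variable (hsys : ∀ n1 n2 : ℤ, n1 ≠ 0 → n2 ≠ 0 → n1 + n2 ≠ 0 →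
      x n1 * y n2 - x (n1 + n2) * z n2 + y (n1 + n2) * z (-n1) = 0)
variable (hpar : ∀ n : ℤ, x (-n) = (starRingEnd ℂ) (x n) ∧ y (-n) = (starRingEnd ℂ) (y n) ∧
      z (-n) = (starRingEnd ℂ) (z n))

include hsys hpar

/-- Core analytic lemma: if x and y are both nonzero at a common index,
then z has finite support. -/
private lemma ev_zero_z_common
    (hsum : Summable (fun n : ℕ =>
      norm (x (n + 1)) + norm (y (n + 1)) + norm (z (n + 1))))
    (hdecay : ∀ ε : ℝ, 0 < ε → ∃ N : ℕ, ∀ n : ℤ, N ≤ n.natAbs →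
      norm (x n) + norm (y n) + norm (z n) < ε)
    (a₀ : ℤ) (ha₀ : a₀ ≠ 0) (hxa₀ : x a₀ ≠ 0) (hya₀ : y a₀ ≠ 0) :
    ∃ K : ℕ, ∀ n : ℤ, K ≤ n.natAbs → z n = 0 := by
  -- replace a₀ by a positive natural A
  obtain ⟨A, hA1, hxA, hyA⟩ : ∃ A : ℕ, 1 ≤ A ∧ x (A : ℤ) ≠ 0 ∧ y (A : ℤ) ≠ 0 := by
    rcases lt_or_gt_of_ne ha₀ with h | h
    · refine ⟨(-a₀).toNat, by omega, ?_, ?_⟩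
      · have e : (((-a₀).toNat : ℕ) : ℤ) = -a₀ := by omega
        rw [e, (hpar a₀).1]
        intro hc; exact hxa₀ (by simpa using congrArg (starRingEnd ℂ) hc)
      · have e : (((-a₀).toNat : ℕ) : ℤ) = -a₀ := by omega
        rw [e, (hpar a₀).2.1]
        intro hc; exact hya₀ (by simpa using congrArg (starRingEnd ℂ) hc)
    · refine ⟨a₀.toNat, by omega, ?_, ?_⟩
      · have e : ((a₀.toNat : ℕ) : ℤ) = a₀ := by omega
        rw [e]; exact hxa₀
      · have e : ((a₀.toNat : ℕ) : ℤ) = a₀ := by omega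
        rw [e]; exact hya₀
  set g : ℕ → ℝ := fun n : ℕ =>
    norm (x ((n : ℤ) + 1)) + norm (y ((n : ℤ) + 1)) + norm (z ((n : ℤ) + 1))
    with hg_def
  have hg : Summable g := hsum
  have hgnn : ∀ n, 0 ≤ g n := by
    intro n
    simp only [hg_def]
    positivity
  have gbound : ∀ N : ℕ, 1 ≤ N →
      norm (x (N : ℤ)) + norm (y (N : ℤ)) ≤ g (N - 1) := by
    intro N hN
    have e : ((N - 1 : ℕ) : ℤ) + 1 = (N : ℤ) := by omega
    have : g (N - 1) = norm (x (((N - 1 : ℕ) : ℤ) + 1))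
        + norm (y (((N - 1 : ℕ) : ℤ) + 1)) + norm (z (((N - 1 : ℕ) : ℤ) + 1)) := rfl
    rw [this, e]
    have := norm_nonneg (z (N : ℤ))
    linarith
  set μ : ℝ := min (norm (x (A : ℤ))) (norm (y (A : ℤ))) with hμ_def
  have hμ : 0 < μ := lt_min (norm_pos_iff.mpr hxA) (norm_pos_iff.mpr hyA)
  -- choose tail cutoff K0
  obtain ⟨K0', hK0'⟩ := Metric.tendsto_atTop.mp (tendsto_sum_nat_add g) (μ / 8) (by positivity)
  set K0 : ℕ := K0' + 1 with hK0_def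
  have hK01 : 1 ≤ K0 := by omega
  have hK0tail : (∑' m : ℕ, g (m + K0)) ≤ μ / 8 := by
    have h := hK0' K0 (by omega)
    rw [Real.dist_eq, sub_zero] at h
    have hnn : 0 ≤ ∑' m : ℕ, g (m + K0) := tsum_nonneg fun m => hgnn _
    rw [abs_of_nonneg hnn] at h
    linarith
  by_contra hcon
  push_neg at hcon
  obtain ⟨n1, hn1, hzn1⟩ := hcon K0
  set k0 : ℕ := n1.natAbs with hk0_def
  have hzk0 : z ((k0 : ℕ) : ℤ) ≠ 0 := by
    rcases le_or_gt 0 n1 with h | h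
    · have e : ((k0 : ℕ) : ℤ) = n1 := by omega
      rw [e]; exact hzn1
    · have e : ((k0 : ℕ) : ℤ) = -n1 := by omega
      rw [e, (hpar n1).2.2]
      intro hc; exact hzn1 (by simpa using congrArg (starRingEnd ℂ) hc)
  have hk0K : K0 ≤ k0 := hn1
  -- the chain
  set k : ℕ → ℕ := fun j => k0 + j * A with hk_def
  have hkpos : ∀ j, 1 ≤ k j := by
    intro j
    have : k0 ≤ k0 + j * A := Nat.le_add_right _ _
    simp only [hk_def]
    omega
  have hkK0 : ∀ j, K0 ≤ k j := by
    intro j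
    have : k0 ≤ k0 + j * A := Nat.le_add_right _ _
    simp only [hk_def]
    omega
  have hcast : ∀ j : ℕ, ((k (j + 1) : ℕ) : ℤ) = ((k j : ℕ) : ℤ) + (A : ℤ) := by
    intro j
    simp only [hk_def]
    push_cast
    ring
  set ζ : ℕ → ℝ := fun j => norm (z ((k j : ℕ) : ℤ)) with hζ_def
  set e : ℕ → ℝ := fun j =>
    (norm (x ((2 * k j + A : ℕ) : ℤ)) + norm (y ((2 * k j + A : ℕ) : ℤ))) / μ
    with he_def
  have hζnn : ∀ j, 0 ≤ ζ j := fun j => norm_nonneg _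
  have henn : ∀ j, 0 ≤ e j := by
    intro j
    simp only [he_def]
    have := norm_nonneg (x ((2 * k j + A : ℕ) : ℤ))
    have := norm_nonneg (y ((2 * k j + A : ℕ) : ℤ))
    positivity
  -- the step inequality
  have hstep : ∀ j : ℕ, (1 - 2 * e j) * ζ j ≤ ζ (j + 1) := by
    intro j
    have hkj0 : ((k j : ℕ) : ℤ) ≠ 0 := by
      have := hkpos j; omega
    have hkj10 : ((k (j + 1) : ℕ) : ℤ) ≠ 0 := by
      have := hkpos (j + 1); omega
    have hA0 : ((A : ℕ) : ℤ) ≠ 0 := by omega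
    have hsum_eq : -((k j : ℕ) : ℤ) + ((k (j + 1) : ℕ) : ℤ) = (A : ℤ) := by
      rw [hcast j]; ring
    have hsum_eq2 : -((k (j + 1) : ℕ) : ℤ) + ((k j : ℕ) : ℤ) = -(A : ℤ) := by
      rw [hcast j]; ring
    have hsumW : ((k j : ℕ) : ℤ) + ((k (j + 1) : ℕ) : ℤ) = ((2 * k j + A : ℕ) : ℤ) := by
      rw [hcast j]; push_cast; ring
    have hsumW' : ((k (j + 1) : ℕ) : ℤ) + ((k j : ℕ) : ℤ) = ((2 * k j + A : ℕ) : ℤ) := by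
      rw [hcast j]; push_cast; ring
    have hW0 : ((2 * k j + A : ℕ) : ℤ) ≠ 0 := by
      have := hkpos j
      omega
    -- abs of z at -(k j) and -(k (j+1))
    have habsz : ∀ m : ℤ, norm (z (-m)) = norm (z m) := by
      intro m; rw [(hpar m).2.2, Complex.norm_conj]
    rcases le_or_gt (norm (x (A : ℤ))) (norm (y (A : ℤ))) with hc | hc
    · -- case |x A| ≤ |y A|, μ = |x A|
      have hμx : μ = norm (x (A : ℤ)) := min_eq_left hc
      have h := hsys (-((k j : ℕ) : ℤ)) ((k (j + 1) : ℕ) : ℤ)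
        (neg_ne_zero.mpr hkj0) hkj10 (by rw [hsum_eq]; exact hA0)
      rw [hsum_eq, neg_neg, (hpar ((k j : ℕ) : ℤ)).1] at h
      have h2 : y (A : ℤ) * z ((k j : ℕ) : ℤ)
          = x (A : ℤ) * z ((k (j + 1) : ℕ) : ℤ)
            - (starRingEnd ℂ) (x ((k j : ℕ) : ℤ)) * y ((k (j + 1) : ℕ) : ℤ) := by
        linear_combination h
      have habs1 : norm (y (A : ℤ)) * ζ j
          ≤ norm (x (A : ℤ)) * ζ (j + 1)
            + norm (x ((k j : ℕ) : ℤ)) * norm (y ((k (j + 1) : ℕ) : ℤ)) := by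
        calc norm (y (A : ℤ)) * ζ j
            = norm (y (A : ℤ) * z ((k j : ℕ) : ℤ)) := by rw [norm_mul]
          _ = norm (x (A : ℤ) * z ((k (j + 1) : ℕ) : ℤ)
              - (starRingEnd ℂ) (x ((k j : ℕ) : ℤ)) * y ((k (j + 1) : ℕ) : ℤ)) := by rw [h2]
          _ ≤ norm (x (A : ℤ) * z ((k (j + 1) : ℕ) : ℤ))
              + norm ((starRingEnd ℂ) (x ((k j : ℕ) : ℤ)) * y ((k (j + 1) : ℕ) : ℤ)) :=
            habs_sub _ _
          _ = norm (x (A : ℤ)) * ζ (j + 1)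
              + norm (x ((k j : ℕ) : ℤ)) * norm (y ((k (j + 1) : ℕ) : ℤ)) := by
            rw [norm_mul, norm_mul, Complex.norm_conj]
      have hB := hsys ((k j : ℕ) : ℤ) ((k (j + 1) : ℕ) : ℤ) hkj0 hkj10
        (by rw [hsumW]; exact hW0)
      rw [hsumW] at hB
      have hB2 : x ((k j : ℕ) : ℤ) * y ((k (j + 1) : ℕ) : ℤ)
          = x ((2 * k j + A : ℕ) : ℤ) * z ((k (j + 1) : ℕ) : ℤ)
            - y ((2 * k j + A : ℕ) : ℤ) * z (-((k j : ℕ) : ℤ)) := by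
        linear_combination hB
      have habs2 : norm (x ((k j : ℕ) : ℤ)) * norm (y ((k (j + 1) : ℕ) : ℤ))
          ≤ norm (x ((2 * k j + A : ℕ) : ℤ)) * ζ (j + 1)
            + norm (y ((2 * k j + A : ℕ) : ℤ)) * ζ j := by
        calc norm (x ((k j : ℕ) : ℤ)) * norm (y ((k (j + 1) : ℕ) : ℤ))
            = norm (x ((k j : ℕ) : ℤ) * y ((k (j + 1) : ℕ) : ℤ)) := by rw [norm_mul]
          _ = norm (x ((2 * k j + A : ℕ) : ℤ) * z ((k (j + 1) : ℕ) : ℤ)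
              - y ((2 * k j + A : ℕ) : ℤ) * z (-((k j : ℕ) : ℤ))) := by rw [hB2]
          _ ≤ norm (x ((2 * k j + A : ℕ) : ℤ) * z ((k (j + 1) : ℕ) : ℤ))
              + norm (y ((2 * k j + A : ℕ) : ℤ) * z (-((k j : ℕ) : ℤ))) := habs_sub _ _
          _ = norm (x ((2 * k j + A : ℕ) : ℤ)) * ζ (j + 1)
              + norm (y ((2 * k j + A : ℕ) : ℤ)) * ζ j := by
            rw [norm_mul, norm_mul, habsz]
      have h3 : μ * ζ j ≤ (μ + norm (x ((2 * k j + A : ℕ) : ℤ))) * ζ (j + 1)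
          + norm (y ((2 * k j + A : ℕ) : ℤ)) * ζ j := by
        have t1 : μ * ζ j ≤ norm (y (A : ℤ)) * ζ j :=
          mul_le_mul_of_nonneg_right (min_le_right _ _) (hζnn j)
        rw [hμx]
        rw [hμx] at t1
        linarith
      have h4 := arith_helper hμ (norm_nonneg _) (norm_nonneg _)
        (hζnn j) (hζnn (j + 1)) h3
      simpa only [he_def] using h4
    · -- case |y A| < |x A|, μ = |y A|
      have hμy : μ = norm (y (A : ℤ)) := min_eq_right (le_of_lt hc)
      have h := hsys (-((k (j + 1) : ℕ) : ℤ)) ((k j : ℕ) : ℤ)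
        (neg_ne_zero.mpr hkj10) hkj0 (by rw [hsum_eq2]; exact neg_ne_zero.mpr hA0)
      rw [hsum_eq2, neg_neg, (hpar ((k (j + 1) : ℕ) : ℤ)).1, (hpar ((A : ℕ) : ℤ)).1,
        (hpar ((A : ℕ) : ℤ)).2.1] at h
      have h2 : (starRingEnd ℂ) (x (A : ℤ)) * z ((k j : ℕ) : ℤ)
          = (starRingEnd ℂ) (y (A : ℤ)) * z ((k (j + 1) : ℕ) : ℤ)
            + (starRingEnd ℂ) (x ((k (j + 1) : ℕ) : ℤ)) * y ((k j : ℕ) : ℤ) := by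
        linear_combination -h
      have habs1 : norm (x (A : ℤ)) * ζ j
          ≤ norm (y (A : ℤ)) * ζ (j + 1)
            + norm (x ((k (j + 1) : ℕ) : ℤ)) * norm (y ((k j : ℕ) : ℤ)) := by
        calc norm (x (A : ℤ)) * ζ j
            = norm ((starRingEnd ℂ) (x (A : ℤ)) * z ((k j : ℕ) : ℤ)) := by
              rw [norm_mul, Complex.norm_conj]
          _ = norm ((starRingEnd ℂ) (y (A : ℤ)) * z ((k (j + 1) : ℕ) : ℤ)
              + (starRingEnd ℂ) (x ((k (j + 1) : ℕ) : ℤ)) * y ((k j : ℕ) : ℤ)) := by rw [h2]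
          _ ≤ norm ((starRingEnd ℂ) (y (A : ℤ)) * z ((k (j + 1) : ℕ) : ℤ))
              + norm ((starRingEnd ℂ) (x ((k (j + 1) : ℕ) : ℤ)) * y ((k j : ℕ) : ℤ)) :=
            norm_add_le _ _
          _ = norm (y (A : ℤ)) * ζ (j + 1)
              + norm (x ((k (j + 1) : ℕ) : ℤ)) * norm (y ((k j : ℕ) : ℤ)) := by
            rw [norm_mul, norm_mul, Complex.norm_conj, Complex.norm_conj]
      have hB := hsys ((k (j + 1) : ℕ) : ℤ) ((k j : ℕ) : ℤ) hkj10 hkj0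
        (by rw [hsumW']; exact hW0)
      rw [hsumW'] at hB
      have hB2 : x ((k (j + 1) : ℕ) : ℤ) * y ((k j : ℕ) : ℤ)
          = x ((2 * k j + A : ℕ) : ℤ) * z ((k j : ℕ) : ℤ)
            - y ((2 * k j + A : ℕ) : ℤ) * z (-((k (j + 1) : ℕ) : ℤ)) := by
        linear_combination hB
      have habs2 : norm (x ((k (j + 1) : ℕ) : ℤ)) * norm (y ((k j : ℕ) : ℤ))
          ≤ norm (x ((2 * k j + A : ℕ) : ℤ)) * ζ j
            + norm (y ((2 * k j + A : ℕ) : ℤ)) * ζ (j + 1) := by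
        calc norm (x ((k (j + 1) : ℕ) : ℤ)) * norm (y ((k j : ℕ) : ℤ))
            = norm (x ((k (j + 1) : ℕ) : ℤ) * y ((k j : ℕ) : ℤ)) := by rw [norm_mul]
          _ = norm (x ((2 * k j + A : ℕ) : ℤ) * z ((k j : ℕ) : ℤ)
              - y ((2 * k j + A : ℕ) : ℤ) * z (-((k (j + 1) : ℕ) : ℤ))) := by rw [hB2]
          _ ≤ norm (x ((2 * k j + A : ℕ) : ℤ) * z ((k j : ℕ) : ℤ))
              + norm (y ((2 * k j + A : ℕ) : ℤ) * z (-((k (j + 1) : ℕ) : ℤ))) :=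
            habs_sub _ _
          _ = norm (x ((2 * k j + A : ℕ) : ℤ)) * ζ j
              + norm (y ((2 * k j + A : ℕ) : ℤ)) * ζ (j + 1) := by
            rw [norm_mul, norm_mul, habsz]
      have h3 : μ * ζ j ≤ (μ + norm (y ((2 * k j + A : ℕ) : ℤ))) * ζ (j + 1)
          + norm (x ((2 * k j + A : ℕ) : ℤ)) * ζ j := by
        have t1 : μ * ζ j ≤ norm (x (A : ℤ)) * ζ j :=
          mul_le_mul_of_nonneg_right (min_le_left _ _) (hζnn j)
        rw [hμy]
        rw [hμy] at t1
        linarith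
      have h4 := arith_helper hμ (norm_nonneg _) (norm_nonneg _)
        (hζnn j) (hζnn (j + 1)) h3
      have he' : e j = (norm (y ((2 * k j + A : ℕ) : ℤ))
          + norm (x ((2 * k j + A : ℕ) : ℤ))) / μ := by
        simp only [he_def]; ring
      rw [he']
      exact h4
  -- the sum of the errors is small
  have hSb : ∀ J : ℕ, ∑ j ∈ Finset.range J, e j ≤ 1 / 8 := by
    intro J
    have hWbig : ∀ j : ℕ, K0 ≤ 2 * k j + A - 1 := by
      intro j
      have h1 := hkK0 j
      omega
    have hterm : ∀ j : ℕ, e j ≤ g ((2 * k j + A - 1 - K0) + K0) / μ := by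
      intro j
      have e1 : (2 * k j + A - 1 - K0) + K0 = 2 * k j + A - 1 := by
        have := hWbig j; omega
      rw [e1]
      have hb := gbound (2 * k j + A) (by have := hWbig j; omega)
      have e2 : 2 * k j + A - 1 = (2 * k j + A) - 1 := rfl
      have : e j = (norm (x ((2 * k j + A : ℕ) : ℤ))
          + norm (y ((2 * k j + A : ℕ) : ℤ))) / μ := rfl
      rw [this]
      exact (div_le_div_iff_of_pos_right hμ).mpr hb
    have hgsum : Summable (fun m : ℕ => g (m + K0)) := (summable_nat_add_iff K0).2 hg
    have hkmono : ∀ {i j : ℕ}, i < j → k i < k j := by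
      intro i j hij
      simp only [hk_def]
      have : i * A < j * A := mul_lt_mul_of_pos_right hij (by omega)
      omega
    have hDmono : ∀ {i j : ℕ}, i < j → 2 * k i + A - 1 - K0 < 2 * k j + A - 1 - K0 := by
      intro i j hij
      have h1 := hkmono hij
      have h2 := hWbig i
      have h3 := hWbig j
      omega
    have hinj : ∀ i ∈ Finset.range J, ∀ j ∈ Finset.range J,
        2 * k i + A - 1 - K0 = 2 * k j + A - 1 - K0 → i = j := by
      intro i _ j _ hij
      by_contra hne
      rcases lt_or_gt_of_ne hne with h | h
      · exact absurd hij (Nat.ne_of_lt (hDmono h))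
      · exact absurd hij.symm (Nat.ne_of_lt (hDmono h))
    calc ∑ j ∈ Finset.range J, e j
        ≤ ∑ j ∈ Finset.range J, g ((2 * k j + A - 1 - K0) + K0) / μ :=
          Finset.sum_le_sum fun j _ => hterm j
      _ = (∑ j ∈ Finset.range J, g ((2 * k j + A - 1 - K0) + K0)) / μ := by
          rw [Finset.sum_div]
      _ ≤ (∑' m : ℕ, g (m + K0)) / μ := by
          apply (div_le_div_iff_of_pos_right hμ).mpr
          calc ∑ j ∈ Finset.range J, g ((2 * k j + A - 1 - K0) + K0)
              = ∑ i ∈ (Finset.range J).image (fun j => 2 * k j + A - 1 - K0), g (i + K0) :=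
                (Finset.sum_image (f := fun i => g (i + K0)) hinj).symm
            _ ≤ ∑' m : ℕ, g (m + K0) := Summable.sum_le_tsum _ (fun i _ => hgnn _) hgsum
      _ ≤ (μ / 8) / μ := (div_le_div_iff_of_pos_right hμ).mpr hK0tail
      _ = 1 / 8 := by field_simp
  -- conclude via decay
  have hζ0pos : 0 < ζ 0 := by
    have h0 : ζ 0 = norm (z ((k 0 : ℕ) : ℤ)) := rfl
    have hk00 : k 0 = k0 := by simp [hk_def]
    rw [h0, hk00]
    exact norm_pos_iff.mpr hzk0
  have hfinal := chain_lower ζ e hζnn henn hSb hstep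
  obtain ⟨N, hN⟩ := hdecay ((1 / 2) * ζ 0) (by positivity)
  have hlow := hfinal N
  have hS := hSb N
  have hge : (1 / 2) * ζ 0 ≤ ζ N := by nlinarith [hζnn 0]
  have hkN : N ≤ k N := by
    simp only [hk_def]
    have : N * 1 ≤ N * A := Nat.mul_le_mul_left N hA1
    omega
  have hbig : N ≤ ((k N : ℕ) : ℤ).natAbs := by simpa using hkN
  have hlt := hN ((k N : ℕ) : ℤ) hbig
  have hzNval : ζ N = norm (z ((k N : ℕ) : ℤ)) := rfl
  nlinarith [norm_nonneg (x ((k N : ℕ) : ℤ)), norm_nonneg (y ((k N : ℕ) : ℤ))]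

/-- If the supports of x and y are disjoint (and both nonempty), then z vanishes far out. -/
private lemma ev_zero_z_disjoint
    (a b : ℤ) (ha : a ≠ 0) (hb : b ≠ 0) (hxa : x a ≠ 0) (hya : y a = 0)
    (hyb : y b ≠ 0) (hxb : x b = 0)
    (hdis : ∀ n : ℤ, n ≠ 0 → x n = 0 ∨ y n = 0) :
    ∃ K : ℕ, ∀ n : ℤ, K ≤ n.natAbs → z n = 0 := by
  refine ⟨a.natAbs + b.natAbs + 1, fun j hj => ?_⟩
  by_contra hzj
  have hj0 : j ≠ 0 := by omega
  have hja : j + a ≠ 0 := by omega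
  have hjb : j + b ≠ 0 := by omega
  -- identity 1 : conj (x a) * z j = conj (x (j+a)) * y j
  have h1 := hsys (-(j + a)) j (by omega) hj0 (by omega)
  have e1 : -(j + a) + j = -a := by ring
  rw [e1, neg_neg, (hpar (j + a)).1, (hpar a).1, (hpar a).2.1, hya] at h1
  -- h1 : conj (x (j+a)) * y j - conj (x a) * z j + conj 0 * z (j + a) = 0
  have hyj : y j ≠ 0 := by
    intro h
    rw [h] at h1
    simp at h1
    rcases h1 with h1 | h1
    · exact hxa (by simpa using congrArg (starRingEnd ℂ) h1)
    · exact hzj h1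
  have hxj : x j = 0 := (hdis j hj0).resolve_right hyj
  -- identity 2 : y b * z j = - conj (x j) * y (j+b) = 0
  have h2 := hsys (-j) (j + b) (by omega) hjb (by omega)
  have e2 : -j + (j + b) = b := by ring
  rw [e2, (hpar j).1, hxj, hxb] at h2
  simp at h2
  rcases h2 with h2 | h2
  · exact hyb h2
  · exact hzj h2

/-- If x and y both have finite support and are both nontrivial, contradiction. -/
private lemma final_contra
    (hx : ∃ n : ℤ, n ≠ 0 ∧ x n ≠ 0) (hy : ∃ n : ℤ, n ≠ 0 ∧ y n ≠ 0)
    (hxZ : ∃ K : ℕ, ∀ n : ℤ, K ≤ n.natAbs → x n = 0)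
    (hyZ : ∃ K : ℕ, ∀ n : ℤ, K ≤ n.natAbs → y n = 0) : False := by
  obtain ⟨Kx, hKx⟩ := hxZ
  obtain ⟨Ky, hKy⟩ := hyZ
  obtain ⟨n0, hn0, hxn0⟩ := hx
  obtain ⟨m0, hm0, hym0⟩ := hy
  -- greatest element of support of x
  obtain ⟨p, ⟨hp0, hxp⟩, hpmax⟩ := Int.exists_greatest_of_bdd
    (P := fun n => n ≠ 0 ∧ x n ≠ 0)
    ⟨Kx, fun n hn => by
      by_contra hc
      exact hn.2 (hKx n (by omega))⟩
    ⟨n0, hn0, hxn0⟩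
  obtain ⟨q, ⟨hq0, hyq⟩, hqmax⟩ := Int.exists_greatest_of_bdd
    (P := fun n => n ≠ 0 ∧ y n ≠ 0)
    ⟨Ky, fun n hn => by
      by_contra hc
      exact hn.2 (hKy n (by omega))⟩
    ⟨m0, hm0, hym0⟩
  have hp1 : 1 ≤ p := by
    rcases (lt_or_gt_of_ne hp0) with h | h
    · have : -p ≤ p := hpmax (-p) ⟨by omega, by rw [(hpar p).1]; simp [hxp]⟩
      omega
    · omega
  have hq1 : 1 ≤ q := by
    rcases (lt_or_gt_of_ne hq0) with h | h
    · have : -q ≤ q := hqmax (-q) ⟨by omega, by rw [(hpar q).2.1]; simp [hyq]⟩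
      omega
    · omega
  have hxpq : x (p + q) = 0 := by
    by_contra hc
    have := hpmax (p + q) ⟨by omega, hc⟩
    omega
  have hypq : y (p + q) = 0 := by
    by_contra hc
    have := hqmax (p + q) ⟨by omega, hc⟩
    omega
  have := hsys p q (by omega) (by omega) (by omega)
  rw [hxpq, hypq] at this
  simp at this
  rcases this with h | h
  · exact hxp h
  · exact hyq h


/-- If z has finite support and x is nontrivial, then y has finite support. -/
private lemma ev_zero_y'
    (hdecay : ∀ ε : ℝ, 0 < ε → ∃ N : ℕ, ∀ n : ℤ, N ≤ n.natAbs →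
      norm (x n) + norm (y n) + norm (z n) < ε)
    (K : ℕ) (hK : ∀ n : ℤ, K ≤ n.natAbs → z n = 0)
    (p₀ : ℤ) (hp₀ : p₀ ≠ 0) (hxp₀ : x p₀ ≠ 0) :
    ∃ K' : ℕ, ∀ n : ℤ, K' ≤ n.natAbs → y n = 0 := by
  -- WLOG positive p
  obtain ⟨p, hp1, hxp⟩ : ∃ p : ℤ, 0 < p ∧ x p ≠ 0 := by
    rcases lt_or_gt_of_ne hp₀ with h | h
    · refine ⟨-p₀, by omega, ?_⟩
      rw [(hpar p₀).1]
      intro hc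
      exact hxp₀ (by simpa using congrArg (starRingEnd ℂ) hc)
    · exact ⟨p₀, h, hxp₀⟩
  have up : ∀ m : ℤ, K + p.natAbs + 1 ≤ m.natAbs →
      norm (x p) * norm (y m) = norm (y (m + p)) * norm (z p) := by
    intro m hm
    have h := hsys p m (by omega) (by omega) (by omega)
    rw [hK m (by omega), (hpar p).2.2, show p + m = m + p from by ring] at h
    have h2 : x p * y m = -(y (m + p) * (starRingEnd ℂ) (z p)) := by linear_combination h
    have h3 := congrArg norm h2
    simpa [norm_mul, Complex.norm_conj] using h3
  have down : ∀ m : ℤ, K + p.natAbs + 1 ≤ m.natAbs →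
      norm (x p) * norm (y m) = norm (y (m - p)) * norm (z p) := by
    intro m hm
    have h := hsys (-p) m (by omega) (by omega) (by omega)
    rw [show -p + m = m - p from by ring, hK m (by omega), (hpar p).1, neg_neg] at h
    have h2 : (starRingEnd ℂ) (x p) * y m = -(y (m - p) * z p) := by linear_combination h
    have h3 := congrArg norm h2
    simpa [norm_mul, Complex.norm_conj] using h3
  by_cases hzp : z p = 0
  · refine ⟨K + p.natAbs + 1, fun m hm => ?_⟩
    have h1 := up m hm
    rw [hzp] at h1
    simp only [norm_zero, mul_zero] at h1
    rcases mul_eq_zero.mp h1 with h | h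
    · exact absurd (norm_eq_zero.mp h) hxp
    · exact norm_eq_zero.mp h
  · by_cases heq : norm (x p) = norm (z p)
    · -- modulus-preserving case: use decay
      refine ⟨K + 2 * p.natAbs + 2, fun m hm => ?_⟩
      by_contra hym
      have hmne : m ≠ 0 := by omega
      have hzp' : norm (z p) ≠ 0 := fun h => hzp (norm_eq_zero.mp h)
      obtain ⟨m0, hm0pos, hm0n, hym0⟩ : ∃ m0 : ℤ, 0 < m0 ∧ m0.natAbs = m.natAbs ∧
          norm (y m0) = norm (y m) := by
        rcases lt_or_gt_of_ne hmne with h | h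
        · exact ⟨-m, by omega, by omega, by rw [(hpar m).2.1, Complex.norm_conj]⟩
        · exact ⟨m, h, rfl, rfl⟩
      have hstep : ∀ n : ℤ, K + p.natAbs + 1 ≤ n.natAbs →
          norm (y (n + p)) = norm (y n) := by
        intro n hn
        have h1 := up n hn
        rw [heq] at h1
        rw [mul_comm (norm (y (n + p)))] at h1
        exact (mul_left_cancel₀ hzp' h1).symm
      have hiter : ∀ j : ℕ, norm (y (m0 + (j : ℤ) * p)) = norm (y m0) := by
        intro j
        induction j with
        | zero => simp
        | succ j ih =>
          have hjp : (0:ℤ) ≤ (j : ℤ) * p := mul_nonneg (by positivity) (le_of_lt hp1)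
          have hn : K + p.natAbs + 1 ≤ (m0 + (j:ℤ) * p).natAbs := by
            generalize hjpt : (j:ℤ) * p = t at hjp
            omega
          have ecast : m0 + ((j+1 : ℕ) : ℤ) * p = (m0 + (j:ℤ) * p) + p := by push_cast; ring
          rw [ecast, hstep _ hn, ih]
      have hvpos : 0 < norm (y m0) := by
        rw [hym0]; exact norm_pos_iff.mpr hym
      obtain ⟨N, hN⟩ := hdecay (norm (y m0)) hvpos
      have hNp : (N:ℤ) ≤ (N:ℤ) * p := le_mul_of_one_le_right (by positivity) hp1
      have hbig : N ≤ (m0 + (N:ℤ) * p).natAbs := by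
        generalize hjpt : (N:ℤ) * p = t at hNp
        omega
      have hlt := hN (m0 + (N:ℤ) * p) hbig
      have herq := hiter N
      nlinarith [norm_nonneg (x (m0 + (N:ℤ) * p)), norm_nonneg (z (m0 + (N:ℤ) * p))]
    · -- moduli differ
      refine ⟨K + 2 * p.natAbs + 2, fun m hm => ?_⟩
      have h1 := up m (by omega)
      have h2 := down (m + p) (by omega)
      rw [show m + p - p = m from by ring] at h2
      by_contra hym
      have hvpos : 0 < norm (y m) := norm_pos_iff.mpr hym
      have hsq : norm (x p) ^ 2 * norm (y m)
          = norm (z p) ^ 2 * norm (y m) := by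
        calc norm (x p) ^ 2 * norm (y m)
            = norm (x p) * (norm (x p) * norm (y m)) := by ring
          _ = norm (x p) * (norm (y (m + p)) * norm (z p)) := by rw [h1]
          _ = (norm (x p) * norm (y (m + p))) * norm (z p) := by ring
          _ = (norm (y m) * norm (z p)) * norm (z p) := by rw [h2]
          _ = norm (z p) ^ 2 * norm (y m) := by ring
      have hsq2 : norm (x p) ^ 2 = norm (z p) ^ 2 :=
        mul_right_cancel₀ (ne_of_gt hvpos) hsq
      have : (norm (x p) - norm (z p)) * (norm (x p) + norm (z p)) = 0 := by
        linear_combination hsq2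
      rcases mul_eq_zero.mp this with h | h
      · exact heq (by linarith)
      · have h1 := norm_nonneg (x p)
        have h2 := norm_nonneg (z p)
        exact heq (by linarith)

/-- If z has finite support and y is nontrivial, then x has finite support. -/
private lemma ev_zero_x'
    (hdecay : ∀ ε : ℝ, 0 < ε → ∃ N : ℕ, ∀ n : ℤ, N ≤ n.natAbs →
      norm (x n) + norm (y n) + norm (z n) < ε)
    (K : ℕ) (hK : ∀ n : ℤ, K ≤ n.natAbs → z n = 0)
    (q₀ : ℤ) (hq₀ : q₀ ≠ 0) (hyq₀ : y q₀ ≠ 0) :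
    ∃ K' : ℕ, ∀ n : ℤ, K' ≤ n.natAbs → x n = 0 := by
  obtain ⟨q, hq1, hyq⟩ : ∃ q : ℤ, 0 < q ∧ y q ≠ 0 := by
    rcases lt_or_gt_of_ne hq₀ with h | h
    · refine ⟨-q₀, by omega, ?_⟩
      rw [(hpar q₀).2.1]
      intro hc
      exact hyq₀ (by simpa using congrArg (starRingEnd ℂ) hc)
    · exact ⟨q₀, h, hyq₀⟩
  have up : ∀ n : ℤ, K + q.natAbs + 1 ≤ n.natAbs →
      norm (x n) * norm (y q) = norm (x (n + q)) * norm (z q) := by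
    intro n hn
    have h := hsys n q (by omega) (by omega) (by omega)
    rw [hK (-n) (by omega)] at h
    have h2 : x n * y q = x (n + q) * z q := by linear_combination h
    have h3 := congrArg norm h2
    simpa [norm_mul] using h3
  have down : ∀ n : ℤ, K + q.natAbs + 1 ≤ n.natAbs →
      norm (x n) * norm (y q) = norm (x (n - q)) * norm (z q) := by
    intro n hn
    have h := hsys n (-q) (by omega) (by omega) (by omega)
    rw [show n + -q = n - q from by ring, hK (-n) (by omega), (hpar q).2.1, (hpar q).2.2] at h
    have h2 : x n * (starRingEnd ℂ) (y q) = x (n - q) * (starRingEnd ℂ) (z q) := by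
      linear_combination h
    have h3 := congrArg norm h2
    simpa [norm_mul, Complex.norm_conj] using h3
  by_cases hzq : z q = 0
  · refine ⟨K + q.natAbs + 1, fun n hn => ?_⟩
    have h1 := up n hn
    rw [hzq] at h1
    simp only [norm_zero, mul_zero] at h1
    rcases mul_eq_zero.mp h1 with h | h
    · exact norm_eq_zero.mp h
    · exact absurd (norm_eq_zero.mp h) hyq
  · by_cases heq : norm (y q) = norm (z q)
    · refine ⟨K + 2 * q.natAbs + 2, fun n hn => ?_⟩
      by_contra hxn
      have hnne : n ≠ 0 := by omega
      have hzq' : norm (z q) ≠ 0 := fun h => hzq (norm_eq_zero.mp h)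
      obtain ⟨n0, hn0pos, hn0n, hxn0⟩ : ∃ n0 : ℤ, 0 < n0 ∧ n0.natAbs = n.natAbs ∧
          norm (x n0) = norm (x n) := by
        rcases lt_or_gt_of_ne hnne with h | h
        · exact ⟨-n, by omega, by omega, by rw [(hpar n).1, Complex.norm_conj]⟩
        · exact ⟨n, h, rfl, rfl⟩
      have hstep : ∀ n' : ℤ, K + q.natAbs + 1 ≤ n'.natAbs →
          norm (x (n' + q)) = norm (x n') := by
        intro n' hn'
        have h1 := up n' hn'
        rw [heq] at h1
        rw [mul_comm (norm (x n')) (norm (z q)),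
          mul_comm (norm (x (n' + q)))] at h1
        exact (mul_left_cancel₀ hzq' h1.symm)
      have hiter : ∀ j : ℕ, norm (x (n0 + (j : ℤ) * q)) = norm (x n0) := by
        intro j
        induction j with
        | zero => simp
        | succ j ih =>
          have hjq : (0:ℤ) ≤ (j : ℤ) * q := mul_nonneg (by positivity) (le_of_lt hq1)
          have hn' : K + q.natAbs + 1 ≤ (n0 + (j:ℤ) * q).natAbs := by
            generalize hjqt : (j:ℤ) * q = t at hjq
            omega
          have ecast : n0 + ((j+1 : ℕ) : ℤ) * q = (n0 + (j:ℤ) * q) + q := by push_cast; ring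
          rw [ecast, hstep _ hn', ih]
      have hvpos : 0 < norm (x n0) := by
        rw [hxn0]; exact norm_pos_iff.mpr hxn
      obtain ⟨N, hN⟩ := hdecay (norm (x n0)) hvpos
      have hNq : (N:ℤ) ≤ (N:ℤ) * q := le_mul_of_one_le_right (by positivity) hq1
      have hbig : N ≤ (n0 + (N:ℤ) * q).natAbs := by
        generalize hjqt : (N:ℤ) * q = t at hNq
        omega
      have hlt := hN (n0 + (N:ℤ) * q) hbig
      have herq := hiter N
      nlinarith [norm_nonneg (y (n0 + (N:ℤ) * q)), norm_nonneg (z (n0 + (N:ℤ) * q))]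
    · refine ⟨K + 2 * q.natAbs + 2, fun n hn => ?_⟩
      have h1 := up n (by omega)
      have h2 := down (n + q) (by omega)
      rw [show n + q - q = n from by ring] at h2
      by_contra hxn
      have hvpos : 0 < norm (x n) := norm_pos_iff.mpr hxn
      have hsq : norm (y q) ^ 2 * norm (x n)
          = norm (z q) ^ 2 * norm (x n) := by
        calc norm (y q) ^ 2 * norm (x n)
            = norm (y q) * (norm (x n) * norm (y q)) := by ring
          _ = norm (y q) * (norm (x (n + q)) * norm (z q)) := by rw [h1]
          _ = (norm (x (n + q)) * norm (y q)) * norm (z q) := by ring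
          _ = (norm (x n) * norm (z q)) * norm (z q) := by
              rw [show norm (x (n + q)) * norm (y q) * norm (z q)
                  = (norm (x (n + q)) * norm (y q)) * norm (z q) from by ring,
                h2]
          _ = norm (z q) ^ 2 * norm (x n) := by ring
      have hsq2 : norm (y q) ^ 2 = norm (z q) ^ 2 :=
        mul_right_cancel₀ (ne_of_gt hvpos) hsq
      have : (norm (y q) - norm (z q)) * (norm (y q) + norm (z q)) = 0 := by
        linear_combination hsq2
      rcases mul_eq_zero.mp this with h | h
      · exact heq (by linarith)
      · have h1 := norm_nonneg (y q)
        have h2 := norm_nonneg (z q)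
        exact heq (by linarith)



end Main

theorem stmt_0 (x y z : ℤ → ℂ)
    (hsys : ∀ n1 n2 : ℤ, n1 ≠ 0 → n2 ≠ 0 → n1 + n2 ≠ 0 →
      x n1 * y n2 - x (n1 + n2) * z n2 + y (n1 + n2) * z (-n1) = 0)
    (hpar : ∀ n : ℤ, x (-n) = (starRingEnd ℂ) (x n) ∧ y (-n) = (starRingEnd ℂ) (y n) ∧
      z (-n) = (starRingEnd ℂ) (z n))
    (hsum : Summable (fun n : ℕ => ‖x (n + 1)‖ + ‖y (n + 1)‖ + ‖z (n + 1)‖)) :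
    (∀ n : ℤ, n ≠ 0 → y n = 0 ∧ z n = 0) ∨
    (∀ n : ℤ, n ≠ 0 → x n = 0 ∧ z n = 0) ∨
    (∀ n : ℤ, n ≠ 0 → x n = 0 ∧ y n = 0) := by
  have hdecay : ∀ ε : ℝ, 0 < ε → ∃ N : ℕ, ∀ n : ℤ, N ≤ n.natAbs →
      norm (x n) + norm (y n) + norm (z n) < ε := by
    intro ε hε
    obtain ⟨N, hN⟩ := Metric.tendsto_atTop.mp hsum.tendsto_atTop_zero ε hε
    refine ⟨N + 1, fun n hn => ?_⟩
    have key : ∀ m : ℤ, 0 < m → N ≤ m.natAbs - 1 →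
        norm (x m) + norm (y m) + norm (z m) < ε := by
      intro m hm hmN
      have h := hN (m.natAbs - 1) hmN
      rw [Real.dist_eq, sub_zero] at h
      have e : ((m.natAbs - 1 : ℕ) : ℤ) + 1 = m := by omega
      rw [e] at h
      calc norm (x m) + norm (y m) + norm (z m)
          ≤ |norm (x m) + norm (y m) + norm (z m)| := le_abs_self _
        _ < ε := h
    rcases lt_trichotomy n 0 with hlt | heq | hgt
    · have hxn : norm (x n) = norm (x (-n)) := by
        have h := (hpar (-n)).1
        rw [neg_neg] at h
        rw [h, Complex.norm_conj]
      have hyn : norm (y n) = norm (y (-n)) := by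
        have h := (hpar (-n)).2.1
        rw [neg_neg] at h
        rw [h, Complex.norm_conj]
      have hzn : norm (z n) = norm (z (-n)) := by
        have h := (hpar (-n)).2.2
        rw [neg_neg] at h
        rw [h, Complex.norm_conj]
      rw [hxn, hyn, hzn]
      exact key (-n) (by omega) (by omega)
    · exfalso; omega
    · exact key n hgt (by omega)
  by_cases hx : ∀ n : ℤ, n ≠ 0 → x n = 0
  · by_cases hy : ∀ n : ℤ, n ≠ 0 → y n = 0
    · exact Or.inr (Or.inr fun n hn => ⟨hx n hn, hy n hn⟩)
    · push_neg at hy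
      obtain ⟨b, hb, hyb⟩ := hy
      refine Or.inr (Or.inl fun j hj => ⟨hx j hj, ?_⟩)
      have hzj : ∀ k : ℤ, k ≠ 0 → y k ≠ 0 → k + j ≠ 0 → z j = 0 := by
        intro k hk hyk hkj
        have h := hsys (-j) (k + j) (by omega) hkj (by omega)
        rw [show -j + (k + j) = k from by ring] at h
        rw [hx (-j) (by omega), hx k hk] at h
        simp at h
        tauto
      rcases eq_or_ne (b + j) 0 with hbj | hbj
      · have hyb' : y (-b) ≠ 0 := by
          rw [(hpar b).2.1]
          intro hc; exact hyb (by simpa using congrArg (starRingEnd ℂ) hc)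
        exact hzj (-b) (by omega) hyb' (by omega)
      · exact hzj b hb hyb hbj
  · push_neg at hx
    obtain ⟨p, hp, hxp⟩ := hx
    by_cases hy : ∀ n : ℤ, n ≠ 0 → y n = 0
    · refine Or.inl fun m hm => ⟨hy m hm, ?_⟩
      have hzm : ∀ k : ℤ, k ≠ 0 → x k ≠ 0 → k - m ≠ 0 → z m = 0 := by
        intro k hk hxk hkm
        have h := hsys (k - m) m (by omega) hm (by omega)
        rw [show k - m + m = k from by ring] at h
        rw [hy m hm, hy k hk] at h
        simp at h
        tauto
      rcases eq_or_ne (p - m) 0 with hpm | hpm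
      · have hxp' : x (-p) ≠ 0 := by
          rw [(hpar p).1]
          intro hc; exact hxp (by simpa using congrArg (starRingEnd ℂ) hc)
        exact hzm (-p) (by omega) hxp' (by omega)
      · exact hzm p hp hxp hpm
    · push_neg at hy
      obtain ⟨q, hq, hyq⟩ := hy
      exfalso
      have hzev : ∃ K : ℕ, ∀ n : ℤ, K ≤ n.natAbs → z n = 0 := by
        by_cases hcom : ∃ a : ℤ, a ≠ 0 ∧ x a ≠ 0 ∧ y a ≠ 0
        · obtain ⟨a, ha, h1, h2⟩ := hcom
          exact ev_zero_z_common x y z hsys hpar hsum hdecay a ha h1 h2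
        · push_neg at hcom
          have hyp : y p = 0 := hcom p hp hxp
          have hxq : x q = 0 := by
            by_contra hxq
            exact hyq (hcom q hq hxq)
          exact ev_zero_z_disjoint x y z hsys hpar p q hp hq hxp hyp hyq hxq
            (fun n hn => by
              by_cases h : x n = 0
              · exact Or.inl h
              · exact Or.inr (hcom n hn h))
      obtain ⟨K, hK⟩ := hzev
      obtain ⟨Ky, hKy⟩ := ev_zero_y' x y z hsys hpar hdecay K hK p hp hxp
      obtain ⟨Kx, hKx⟩ := ev_zero_x' x y z hsys hpar hdecay K hK q hq hyq
      exact final_contra x y z hsys hpar ⟨p, hp, hxp⟩ ⟨q, hq, hyq⟩ ⟨Kx, hKx⟩ ⟨Ky, hKy⟩
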